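/- Let X be a standard Borel space, let a countable group Γ act on X by Borel automorphisms, and let F be the induced orbit equivalence relation. Suppose E is a Borel equivalence relation on X with E ⊆ F. If F admits a Borel selector, then E admits a Borel selector. -/

import Mathlib

/-- If `F`, the orbit equivalence relation of a Borel action of a countable group `Γ` on a
standard Borel space `X`, admits a Borel selector, then so does any Borel equivalence
relation `E ⊆ F`. -/
theorem stmt_0 {X : Type*} [MeasurableSpace X] [StandardBorelSpace X]
    {Γ : Type*} [Group Γ] [Countable Γ] [MulAction Γ X]
    (hact : ∀ γ : Γ, Measurable fun x : X => γ • x)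
    (E : X → X → Prop) (hE : Equivalence E)
    (hEmeas : MeasurableSet {p : X × X | E p.1 p.2})
    (hsub : ∀ x y : X, E x y → ∃ γ : Γ, γ • x = y)
    (f : X → X) (hf : Measurable f)
    (hf1 : ∀ x : X, ∃ γ : Γ, γ • x = f x)
    (hf2 : ∀ x y : X, (∃ γ : Γ, γ • x = y) → f x = f y) :
    ∃ g : X → X, Measurable g ∧ (∀ x, E (g x) x) ∧ ∀ x y, E x y → g x = g y := by
  classical
  obtain ⟨e, he⟩ := exists_surjective_nat Γ
  have hp : ∀ x : X, ∃ n : ℕ, E (e n • f x) x := by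
    intro x
    obtain ⟨γ, hγ⟩ := hf1 x
    obtain ⟨n, hn⟩ := he γ⁻¹
    refine ⟨n, ?_⟩
    rw [hn, ← hγ, inv_smul_smul]
    exact hE.refl x
  set N : X → ℕ := fun x => Nat.find (hp x) with hN
  have hNmeas : Measurable N := by
    apply measurable_find
    intro k
    have : {x : X | E (e k • f x) x} = (fun x => (e k • f x, x)) ⁻¹' {p : X × X | E p.1 p.2} :=
      rfl
    rw [this]
    exact ((hact (e k)).comp hf |>.prodMk measurable_id) hEmeas
  refine ⟨fun x => e (N x) • f x, ?_, ?_, ?_⟩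
  · have : (fun x => e (N x) • f x) =
        (fun p : X × ℕ => e p.2 • f p.1) ∘ fun x => (x, N x) := rfl
    rw [this]
    exact (measurable_from_prod_countable_left fun n => (hact (e n)).comp hf).comp
      (measurable_id.prodMk hNmeas)
  · intro x
    exact Nat.find_spec (hp x)
  · intro x y hxy
    have hfxy : f x = f y := hf2 x y (hsub x y hxy)
    have key : ∀ n, (E (e n • f x) x ↔ E (e n • f y) y) := by
      intro n
      rw [hfxy]
      exact ⟨fun h => hE.trans h hxy, fun h => hE.trans h (hE.symm hxy)⟩
    have hNeq : N x = N y :=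
      le_antisymm (Nat.find_le ((key _).2 (Nat.find_spec (hp y))))
        (Nat.find_le ((key _).1 (Nat.find_spec (hp x))))
    show e (N x) • f x = e (N y) • f y
    rw [hNeq, hfxy]
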